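/- Let (A, ∧, δ, Δ, [·•·]) be a dGBV algebra and let a ∈ A₀ be an even element satisfying δa + (1/2)[a•a] = 0 and Δa = 0. Then (A, ∧, δ_a, Δ, [·•·]) is again a dGBV algebra, where δ_a := δ + [a•·]; in particular δ_a² = 0, δ_a Δ + Δ δ_a = 0, and δ_a is an odd derivation of the product: δ_a(b ∧ c) = (δ_a b) ∧ c + (−1)^{|b|} b ∧ (δ_a c) for all homogeneous b, c, while the bracket generated by Δ is unchanged. -/

import Mathlib

/-- The bracket generated by the odd operator `Δ` on a `ℤ₂`-graded algebra:
for `a` homogeneous of degree `i`,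
`[a • b] = (−1)^{|a|} (Δ(a ∧ b) − (Δa) ∧ b − (−1)^{|a|} a ∧ Δb)`. -/
noncomputable def dgbvBracket {k A : Type*} [Field k] [Ring A] [Algebra k A]
    (Δ : A →ₗ[k] A) (i : ZMod 2) (a b : A) : A :=
  ((-1 : k) ^ i.val) • (Δ (a * b) - Δ a * b - ((-1 : k) ^ i.val) • (a * Δ b))

/-- A differential Gerstenhaber–Batalin–Vilkovisky (dGBV) algebra over a field `k`
of characteristic zero: a `ℤ₂`-graded supercommutative associative unital `k`-algebra
`A` together with odd operators `δ`, `Δ` such that `δ² = Δ² = 0`, `δΔ + Δδ = 0`,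
`δ` is an odd derivation of the product, and the bracket generated by `Δ` satisfies
the odd Poisson (Leibniz) identity. -/
structure DGBV (k : Type*) [Field k] [CharZero k] (A : Type*) [Ring A] [Algebra k A] where
  grading : ZMod 2 → Submodule k A
  gradedAlgebra : GradedAlgebra grading
  supercomm : ∀ (i j : ZMod 2), ∀ a ∈ grading i, ∀ b ∈ grading j,
    a * b = ((-1 : k) ^ (i.val * j.val)) • (b * a)
  δ : A →ₗ[k] A
  Δ : A →ₗ[k] A
  δ_odd : ∀ (i : ZMod 2), ∀ a ∈ grading i, δ a ∈ grading (i + 1)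
  Δ_odd : ∀ (i : ZMod 2), ∀ a ∈ grading i, Δ a ∈ grading (i + 1)
  δ_sq : ∀ a : A, δ (δ a) = 0
  Δ_sq : ∀ a : A, Δ (Δ a) = 0
  δΔ_anticomm : ∀ a : A, δ (Δ a) + Δ (δ a) = 0
  δ_derivation : ∀ (i : ZMod 2), ∀ a ∈ grading i, ∀ (j : ZMod 2), ∀ b ∈ grading j,
    δ (a * b) = δ a * b + ((-1 : k) ^ i.val) • (a * δ b)
  bracket_derivation : ∀ (i j : ZMod 2), ∀ a ∈ grading i, ∀ b ∈ grading j,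
    ∀ (l : ZMod 2), ∀ c ∈ grading l,
    dgbvBracket Δ i a (b * c) =
      dgbvBracket Δ i a b * c + ((-1 : k) ^ ((i + 1).val * j.val)) • (b * dgbvBracket Δ i a c)

/-- If `a` is an even element of a dGBV algebra satisfying `δa + (1/2)[a•a] = 0` and
`Δa = 0`, then `(A, ∧, δ_a, Δ, [·•·])`, with `δ_a = δ + [a•·]`, is again a dGBV algebra;
in particular `δ_a² = 0`, `δ_a Δ + Δ δ_a = 0`, and `δ_a` is an odd derivation of the
product, while the bracket generated by `Δ` is unchanged. -/
theorem dgbv_deformed_is_dgbv {k A : Type*} [Field k] [CharZero k] [Ring A] [Algebra k A]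
    (D : DGBV k A) (a : A) (ha : a ∈ D.grading 0)
    (hMC : D.δ a + (1 / 2 : k) • dgbvBracket D.Δ 0 a a = 0) (hΔa : D.Δ a = 0) :
    ∃ D' : DGBV k A, D'.grading = D.grading ∧ D'.Δ = D.Δ ∧
      (∀ b : A, D'.δ b = D.δ b + dgbvBracket D.Δ 0 a b) ∧
      (∀ (i : ZMod 2) (b c : A), dgbvBracket D'.Δ i b c = dgbvBracket D.Δ i b c) ∧
      (∀ b : A, D'.δ (D'.δ b) = 0) ∧
      (∀ b : A, D'.δ (D.Δ b) + D.Δ (D'.δ b) = 0) ∧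
      (∀ (j : ZMod 2), ∀ b ∈ D.grading j, ∀ (l : ZMod 2), ∀ c ∈ D.grading l,
        D'.δ (b * c) = D'.δ b * c + ((-1 : k) ^ j.val) • (b * D'.δ c)) := by
  classical
  have h0 : ((0 : ZMod 2)).val = 0 := rfl
  have h1 : ((1 : ZMod 2)).val = 1 := rfl
  -- the perturbation `[a • ·]` as a linear map
  set L : A →ₗ[k] A :=
    D.Δ ∘ₗ LinearMap.mulLeft k a - LinearMap.mulLeft k (D.Δ a) - LinearMap.mulLeft k a ∘ₗ D.Δ
    with hLdef
  have hL : ∀ b, L b = dgbvBracket D.Δ 0 a b := by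
    intro b; simp [hLdef, dgbvBracket, h0]
  have hL2 : ∀ b, L b = D.Δ (a * b) - a * D.Δ b := by
    intro b; simp [hLdef, hΔa]
  have hBr : ∀ x, dgbvBracket D.Δ 0 a x = D.Δ (a * x) - a * D.Δ x := by
    intro x; rw [← hL, hL2]
  -- Maurer–Cartan in explicit form
  have hδa : D.δ a = -((1 / 2 : k) • D.Δ (a * a)) := by
    rw [hBr, hΔa, mul_zero, sub_zero] at hMC
    exact eq_neg_of_add_eq_zero_left hMC
  -- the deformed differential is odd
  have hodd : ∀ (i : ZMod 2), ∀ b ∈ D.grading i, (D.δ + L) b ∈ D.grading (i + 1) := by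
    intro i b hb
    letI := D.gradedAlgebra
    refine Submodule.add_mem _ (D.δ_odd i b hb) ?_
    rw [hL2]
    refine Submodule.sub_mem _ ?_ ?_
    · have h : a * b ∈ D.grading (0 + i) := SetLike.mul_mem_graded ha hb
      rw [zero_add] at h
      exact D.Δ_odd i _ h
    · have h : a * D.Δ b ∈ D.grading (0 + (i + 1)) := SetLike.mul_mem_graded ha (D.Δ_odd i b hb)
      rwa [zero_add] at h
  -- anticommutation with Δ
  have hanti : ∀ b, (D.δ + L) (D.Δ b) + D.Δ ((D.δ + L) b) = 0 := by
    intro b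
    have h := D.δΔ_anticomm b
    simp only [LinearMap.add_apply, hL2, map_sub, map_add, D.Δ_sq, mul_zero, sub_zero]
    linear_combination (norm := module) h
  -- derivation property
  have hderiv : ∀ (j : ZMod 2), ∀ b ∈ D.grading j, ∀ (l : ZMod 2), ∀ c ∈ D.grading l,
      (D.δ + L) (b * c) = (D.δ + L) b * c + ((-1 : k) ^ j.val) • (b * (D.δ + L) c) := by
    intro j b hb l c hc
    have hd := D.δ_derivation j b hb l c hc
    have hbd := D.bracket_derivation 0 j a ha b hb l c hc
    rw [← hL, ← hL, ← hL, zero_add, h1, one_mul] at hbd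
    simp only [LinearMap.add_apply, hd, hbd]
    rw [add_mul, mul_add, smul_add]; abel
  -- squaring to zero on homogeneous elements
  have key : ∀ (j : ZMod 2), ∀ b ∈ D.grading j, (D.δ + L) ((D.δ + L) b) = 0 := by
    intro j b hb
    have hΔb := D.Δ_odd j b hb
    have E0 := D.δ_derivation 0 a ha j b hb
    rw [h0, pow_zero, one_smul] at E0
    have E1 := D.δ_derivation 0 a ha (j + 1) (D.Δ b) hΔb
    rw [h0, pow_zero, one_smul] at E1
    have E2 : ∀ x, D.δ (D.Δ x) = -D.Δ (D.δ x) := fun x =>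
      eq_neg_of_add_eq_zero_left (D.δΔ_anticomm x)
    have H1 := D.bracket_derivation 0 0 a ha a ha j b hb
    rw [hBr, hBr, hBr, zero_add, h1, h0, Nat.mul_zero, pow_zero, one_smul, hΔa, mul_zero,
      sub_zero] at H1
    have H2 := D.bracket_derivation 0 0 a ha a ha (j + 1) (D.Δ b) hΔb
    rw [hBr, hBr, hBr, zero_add, h1, h0, Nat.mul_zero, pow_zero, one_smul, hΔa, mul_zero,
      sub_zero, D.Δ_sq, mul_zero, sub_zero] at H2
    have H3 := congrArg D.Δ H1
    rw [mul_sub] at H3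
    simp only [map_add, map_sub, D.Δ_sq] at H3
    simp only [LinearMap.add_apply, map_add, D.δ_sq, hL2, map_sub, E0, E1, E2, hδa, D.Δ_sq,
      mul_zero, sub_zero, zero_add, map_smul, map_neg, mul_neg, neg_mul, smul_add, smul_sub,
      smul_neg, mul_smul_comm, smul_mul_assoc]
    linear_combination (norm := module) (-(1/2 : k)) • H3 - (1/2 : k) • H2
  have hsq : ∀ b, (D.δ + L) ((D.δ + L) b) = 0 := by
    letI := D.gradedAlgebra
    intro b
    refine DirectSum.Decomposition.inductionOn D.grading (motive := fun b => (D.δ + L) ((D.δ + L) b) = 0) ?_ ?_ ?_ b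
    · simp
    · intro i x; exact key i x x.2
    · intro x y hx hy; rw [map_add, map_add, hx, hy, add_zero]
  refine ⟨⟨D.grading, D.gradedAlgebra, D.supercomm, D.δ + L, D.Δ, hodd, D.Δ_odd, hsq, D.Δ_sq,
    hanti, hderiv, D.bracket_derivation⟩, rfl, rfl, ?_, fun i b c => rfl, hsq, hanti, hderiv⟩
  intro b
  show (D.δ + L) b = _
  rw [LinearMap.add_apply, hL]
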